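/- Let {φ_ℓ}_{ℓ=1}^N and {ψ_ℓ}_{ℓ=1}^N generate two orthonormal bases of the same shift-invariant subspace A of L² with shift T, and define the analog coherence μ(Φ,Ψ) = max_{ℓ,r} ess sup_ω |R_{φ_ℓ ψ_r}(e^{jω})|, where R_{φψ}(e^{jω}) is the DTFT of the cross-correlation sequence r_{φψ}[n] = ⟨φ(·−nT), ψ⟩. If a nonzero x ∈ A can be written using only A generators from {φ_ℓ} (i.e., at most A of the coefficient sequences a_ℓ[·] are not identically zero) and using only B generators from {ψ_ℓ}, then √(A·B) ≥ 1/μ(Φ,Ψ). -/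

import Mathlib

open MeasureTheory Real
open scoped BigOperators

/-- The sampled cross-spectrum `R_{φψ}(e^{jω}) = (1/T) Σ_k conj(Φ((ω−2πk)/T)) Ψ((ω−2πk)/T)`,
expressed in terms of the Fourier transforms `Φ`, `Ψ` of the generators. -/
noncomputable def sampledCross (T : ℝ) (f g : ℝ → ℂ) (ω : ℝ) : ℂ :=
  (1 / (T : ℂ)) * ∑' k : ℤ, (starRingEnd ℂ) (f ((ω - 2 * π * k) / T)) * g ((ω - 2 * π * k) / T)

lemma aux_summable_sq (f : ℤ → ℂ) (h : Summable (fun k => (starRingEnd ℂ) (f k) * f k)) :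
    Summable (fun k => ‖f k‖ ^ 2) := by
  have h2 : Summable (fun k => ‖(starRingEnd ℂ) (f k) * f k‖) := summable_norm_iff.mpr h
  simpa [norm_mul, RCLike.norm_conj, sq] using h2

lemma aux_summable_cross (f g : ℤ → ℂ) (hf : Summable (fun k => ‖f k‖ ^ 2))
    (hg : Summable (fun k => ‖g k‖ ^ 2)) :
    Summable (fun k => (starRingEnd ℂ) (f k) * g k) := by
  apply Summable.of_norm
  refine Summable.of_nonneg_of_le (fun k => norm_nonneg _) (fun k => ?_)
    ((hf.add hg).mul_left (1 / 2))
  rw [norm_mul, RCLike.norm_conj]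
  nlinarith [norm_nonneg (f k), norm_nonneg (g k), sq_nonneg (‖f k‖ - ‖g k‖)]

lemma sampledCross_conj (T : ℝ) (f g : ℝ → ℂ) (ω : ℝ) :
    sampledCross T g f ω = (starRingEnd ℂ) (sampledCross T f g ω) := by
  simp only [sampledCross, map_mul]
  congr 1
  · simp
  · rw [starRingEnd_apply, tsum_star]
    exact tsum_congr fun k => by
      simp only [starRingEnd_apply, star_mul, star_star]

lemma diag_summable (T : ℝ) (hT : 0 < T) (f : ℝ → ℂ) (ω : ℝ)
    (h : sampledCross T f f ω = 1) :
    Summable (fun k : ℤ => ‖f ((ω - 2 * π * k) / T)‖ ^ 2) := by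
  apply aux_summable_sq
  by_contra hs
  rw [sampledCross, tsum_eq_zero_of_not_summable hs, mul_zero] at h
  exact zero_ne_one h

lemma key_identity {N : ℕ} (T : ℝ) (hT : 0 < T) (Φ Ψ : Fin N → ℝ → ℂ)
    (a b : Fin N → ℝ → ℂ)
    (haper : ∀ ℓ, Function.Periodic (a ℓ) (2 * π))
    (hbper : ∀ ℓ, Function.Periodic (b ℓ) (2 * π))
    (X : ℝ → ℂ)
    (hXa : ∀ ω, X ω = ∑ ℓ : Fin N, a ℓ (ω * T) * Φ ℓ ω)
    (hXb : ∀ ω, X ω = ∑ ℓ : Fin N, b ℓ (ω * T) * Ψ ℓ ω)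
    (ω : ℝ)
    (hΦsum : ∀ ℓ, Summable (fun k : ℤ => ‖Φ ℓ ((ω - 2 * π * k) / T)‖ ^ 2))
    (hΨsum : ∀ ℓ, Summable (fun k : ℤ => ‖Ψ ℓ ((ω - 2 * π * k) / T)‖ ^ 2))
    (hΦorth : ∀ ℓ r, sampledCross T (Φ ℓ) (Φ r) ω = if ℓ = r then 1 else 0)
    (ℓ : Fin N) :
    a ℓ ω = ∑ r, b r ω * sampledCross T (Φ ℓ) (Ψ r) ω := by
  have hTne : T ≠ 0 := ne_of_gt hT
  have huT : ∀ k : ℤ, ((ω - 2 * π * k) / T) * T = ω - k * (2 * π) := by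
    intro k; field_simp
  have hXau : ∀ k : ℤ, X ((ω - 2 * π * k) / T)
      = ∑ r, a r ω * Φ r ((ω - 2 * π * k) / T) := by
    intro k
    rw [hXa ((ω - 2 * π * k) / T)]
    refine Finset.sum_congr rfl fun r _ => ?_
    rw [huT k, Function.Periodic.sub_int_mul_eq (haper r)]
  have hXbu : ∀ k : ℤ, X ((ω - 2 * π * k) / T)
      = ∑ r, b r ω * Ψ r ((ω - 2 * π * k) / T) := by
    intro k
    rw [hXb ((ω - 2 * π * k) / T)]
    refine Finset.sum_congr rfl fun r _ => ?_
    rw [huT k, Function.Periodic.sub_int_mul_eq (hbper r)]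
  have hsumΦΦ : ∀ r, Summable (fun k : ℤ =>
      (starRingEnd ℂ) (Φ ℓ ((ω - 2 * π * k) / T)) * Φ r ((ω - 2 * π * k) / T)) :=
    fun r => aux_summable_cross _ _ (hΦsum ℓ) (hΦsum r)
  have hsumΦΨ : ∀ r, Summable (fun k : ℤ =>
      (starRingEnd ℂ) (Φ ℓ ((ω - 2 * π * k) / T)) * Ψ r ((ω - 2 * π * k) / T)) :=
    fun r => aux_summable_cross _ _ (hΦsum ℓ) (hΨsum r)
  have e1 : ∑' k : ℤ, (starRingEnd ℂ) (Φ ℓ ((ω - 2 * π * k) / T)) * X ((ω - 2 * π * k) / T)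
      = ∑ r, a r ω * ∑' k : ℤ,
          (starRingEnd ℂ) (Φ ℓ ((ω - 2 * π * k) / T)) * Φ r ((ω - 2 * π * k) / T) := by
    have : (fun k : ℤ => (starRingEnd ℂ) (Φ ℓ ((ω - 2 * π * k) / T)) * X ((ω - 2 * π * k) / T))
        = fun k : ℤ => ∑ r, a r ω *
            ((starRingEnd ℂ) (Φ ℓ ((ω - 2 * π * k) / T)) * Φ r ((ω - 2 * π * k) / T)) := by
      funext k
      rw [hXau k, Finset.mul_sum]
      exact Finset.sum_congr rfl fun r _ => by ring
    rw [this, Summable.tsum_finsetSum fun r _ => (hsumΦΦ r).mul_left _]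
    exact Finset.sum_congr rfl fun r _ => tsum_mul_left
  have e2 : ∑' k : ℤ, (starRingEnd ℂ) (Φ ℓ ((ω - 2 * π * k) / T)) * X ((ω - 2 * π * k) / T)
      = ∑ r, b r ω * ∑' k : ℤ,
          (starRingEnd ℂ) (Φ ℓ ((ω - 2 * π * k) / T)) * Ψ r ((ω - 2 * π * k) / T) := by
    have : (fun k : ℤ => (starRingEnd ℂ) (Φ ℓ ((ω - 2 * π * k) / T)) * X ((ω - 2 * π * k) / T))
        = fun k : ℤ => ∑ r, b r ω *
            ((starRingEnd ℂ) (Φ ℓ ((ω - 2 * π * k) / T)) * Ψ r ((ω - 2 * π * k) / T)) := by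
      funext k
      rw [hXbu k, Finset.mul_sum]
      exact Finset.sum_congr rfl fun r _ => by ring
    rw [this, Summable.tsum_finsetSum fun r _ => (hsumΦΨ r).mul_left _]
    exact Finset.sum_congr rfl fun r _ => tsum_mul_left
  have eA : (1 / (T : ℂ)) * ∑' k : ℤ,
      (starRingEnd ℂ) (Φ ℓ ((ω - 2 * π * k) / T)) * X ((ω - 2 * π * k) / T) = a ℓ ω := by
    rw [e1, Finset.mul_sum]
    have h1 : ∀ r : Fin N, (1 / (T : ℂ)) * (a r ω * ∑' k : ℤ,
        (starRingEnd ℂ) (Φ ℓ ((ω - 2 * π * k) / T)) * Φ r ((ω - 2 * π * k) / T))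
        = a r ω * sampledCross T (Φ ℓ) (Φ r) ω := by
      intro r; rw [sampledCross]; ring
    rw [Finset.sum_congr rfl fun r _ => h1 r]
    simp [hΦorth, mul_ite]
  have eB : (1 / (T : ℂ)) * ∑' k : ℤ,
      (starRingEnd ℂ) (Φ ℓ ((ω - 2 * π * k) / T)) * X ((ω - 2 * π * k) / T)
      = ∑ r, b r ω * sampledCross T (Φ ℓ) (Ψ r) ω := by
    rw [e2, Finset.mul_sum]
    refine Finset.sum_congr rfl fun r _ => ?_
    rw [sampledCross]; ring
  rw [← eA, eB]

/-- Analog uncertainty principle for shift-invariant spaces: if a nonzero signal `X`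
(in the Fourier domain) can be expanded using `A = Sa.card` generators of the orthonormal
family `Φ` and `B = Sb.card` generators of the orthonormal family `Ψ`, then
`√(A·B) ≥ 1/μ(Φ,Ψ)` where `μ` bounds the sampled cross-spectra a.e. -/
theorem stmt9 (N : ℕ) (T : ℝ) (hT : 0 < T)
    (Φ Ψ : Fin N → ℝ → ℂ)
    (hΦmeas : ∀ ℓ, Measurable (Φ ℓ)) (hΨmeas : ∀ ℓ, Measurable (Ψ ℓ))
    (hΦorth : ∀ ℓ r, ∀ᵐ ω ∂(volume : Measure ℝ),
      sampledCross T (Φ ℓ) (Φ r) ω = if ℓ = r then 1 else 0)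
    (hΨorth : ∀ ℓ r, ∀ᵐ ω ∂(volume : Measure ℝ),
      sampledCross T (Ψ ℓ) (Ψ r) ω = if ℓ = r then 1 else 0)
    (μ : ℝ) (hμpos : 0 < μ)
    (hμ : ∀ ℓ r, ∀ᵐ ω ∂(volume : Measure ℝ), ‖sampledCross T (Φ ℓ) (Ψ r) ω‖ ≤ μ)
    (X : ℝ → ℂ)
    (hX2 : Integrable (fun ω => ‖X ω‖ ^ 2))
    (hXne : 0 < ∫ ω, ‖X ω‖ ^ 2)
    (a b : Fin N → ℝ → ℂ)
    (haper : ∀ ℓ, Function.Periodic (a ℓ) (2 * π))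
    (hbper : ∀ ℓ, Function.Periodic (b ℓ) (2 * π))
    (hXa : ∀ ω, X ω = ∑ ℓ : Fin N, a ℓ (ω * T) * Φ ℓ ω)
    (hXb : ∀ ω, X ω = ∑ ℓ : Fin N, b ℓ (ω * T) * Ψ ℓ ω)
    (Sa Sb : Finset (Fin N))
    (hSa : ∀ ℓ, ℓ ∉ Sa → ∀ ω, a ℓ ω = 0)
    (hSb : ∀ ℓ, ℓ ∉ Sb → ∀ ω, b ℓ ω = 0) :
    Real.sqrt ((Sa.card : ℝ) * Sb.card) ≥ 1 / μ := by
  -- combine the a.e. hypotheses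
  have h1 : ∀ᵐ ω ∂(volume : Measure ℝ), ∀ ℓ r : Fin N,
      sampledCross T (Φ ℓ) (Φ r) ω = if ℓ = r then 1 else 0 :=
    ae_all_iff.mpr fun ℓ => ae_all_iff.mpr fun r => hΦorth ℓ r
  have h2 : ∀ᵐ ω ∂(volume : Measure ℝ), ∀ ℓ r : Fin N,
      sampledCross T (Ψ ℓ) (Ψ r) ω = if ℓ = r then 1 else 0 :=
    ae_all_iff.mpr fun ℓ => ae_all_iff.mpr fun r => hΨorth ℓ r
  have h3 : ∀ᵐ ω ∂(volume : Measure ℝ), ∀ ℓ r : Fin N,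
      ‖sampledCross T (Φ ℓ) (Ψ r) ω‖ ≤ μ :=
    ae_all_iff.mpr fun ℓ => ae_all_iff.mpr fun r => hμ ℓ r
  have hae : ∀ᵐ ω ∂(volume : Measure ℝ),
      (∀ ℓ : Fin N, ‖a ℓ ω‖ ≤ μ * ∑ r ∈ Sb, ‖b r ω‖) ∧
      (∀ r : Fin N, ‖b r ω‖ ≤ μ * ∑ ℓ ∈ Sa, ‖a ℓ ω‖) := by
    filter_upwards [h1, h2, h3] with ω hΦo hΨo hc
    have hΦsum : ∀ ℓ, Summable (fun k : ℤ => ‖Φ ℓ ((ω - 2 * π * k) / T)‖ ^ 2) :=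
      fun ℓ => diag_summable T hT _ ω (by simpa using hΦo ℓ ℓ)
    have hΨsum : ∀ ℓ, Summable (fun k : ℤ => ‖Ψ ℓ ((ω - 2 * π * k) / T)‖ ^ 2) :=
      fun ℓ => diag_summable T hT _ ω (by simpa using hΨo ℓ ℓ)
    constructor
    · intro ℓ
      rw [key_identity T hT Φ Ψ a b haper hbper X hXa hXb ω hΦsum hΨsum hΦo ℓ]
      have hres : ∑ r : Fin N, b r ω * sampledCross T (Φ ℓ) (Ψ r) ω
          = ∑ r ∈ Sb, b r ω * sampledCross T (Φ ℓ) (Ψ r) ω := by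
        refine (Finset.sum_subset Sb.subset_univ fun r _ hr => ?_).symm
        rw [hSb r hr ω, zero_mul]
      rw [hres]
      calc ‖∑ r ∈ Sb, b r ω * sampledCross T (Φ ℓ) (Ψ r) ω‖
          ≤ ∑ r ∈ Sb, ‖b r ω * sampledCross T (Φ ℓ) (Ψ r) ω‖ := norm_sum_le _ _
        _ ≤ ∑ r ∈ Sb, μ * ‖b r ω‖ := by
            refine Finset.sum_le_sum fun r _ => ?_
            rw [norm_mul, mul_comm]
            exact mul_le_mul_of_nonneg_right (hc ℓ r) (norm_nonneg _)
        _ = μ * ∑ r ∈ Sb, ‖b r ω‖ := by rw [Finset.mul_sum]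
    · intro r
      rw [key_identity T hT Ψ Φ b a hbper haper X hXb hXa ω hΨsum hΦsum hΨo r]
      have hres : ∑ ℓ : Fin N, a ℓ ω * sampledCross T (Ψ r) (Φ ℓ) ω
          = ∑ ℓ ∈ Sa, a ℓ ω * sampledCross T (Ψ r) (Φ ℓ) ω := by
        refine (Finset.sum_subset Sa.subset_univ fun ℓ _ hℓ => ?_).symm
        rw [hSa ℓ hℓ ω, zero_mul]
      rw [hres]
      calc ‖∑ ℓ ∈ Sa, a ℓ ω * sampledCross T (Ψ r) (Φ ℓ) ω‖
          ≤ ∑ ℓ ∈ Sa, ‖a ℓ ω * sampledCross T (Ψ r) (Φ ℓ) ω‖ := norm_sum_le _ _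
        _ ≤ ∑ ℓ ∈ Sa, μ * ‖a ℓ ω‖ := by
            refine Finset.sum_le_sum fun ℓ _ => ?_
            rw [norm_mul, mul_comm, sampledCross_conj, RCLike.norm_conj]
            exact mul_le_mul_of_nonneg_right (hc ℓ r) (norm_nonneg _)
        _ = μ * ∑ ℓ ∈ Sa, ‖a ℓ ω‖ := by rw [Finset.mul_sum]
  -- the coefficients are not a.e. zero
  have hXnz : ∃ᵐ ω ∂(volume : Measure ℝ), X ω ≠ 0 := by
    by_contra h
    have h0 : ∀ᵐ ω ∂(volume : Measure ℝ), X ω = 0 := by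
      simpa using Filter.not_frequently.mp h
    have : ∫ ω, ‖X ω‖ ^ 2 = 0 := by
      rw [integral_congr_ae (h0.mono fun ω hω => by rw [hω])]
      simp
    linarith
  have hanz : ∃ᵐ ν ∂(volume : Measure ℝ), ∃ ℓ, a ℓ ν ≠ 0 := by
    by_contra h
    have h0 : ∀ᵐ ν ∂(volume : Measure ℝ), ∀ ℓ, a ℓ ν = 0 := by
      have := Filter.not_frequently.mp h
      exact this.mono fun ν hν => by push_neg at hν; exact hν
    have hqmp : Measure.QuasiMeasurePreserving (fun ω : ℝ => ω * T) volume volume := by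
      refine ⟨measurable_mul_const T, ?_⟩
      rw [Real.map_volume_mul_right (ne_of_gt hT)]
      exact Measure.smul_absolutelyContinuous
    have h0' : ∀ᵐ ω ∂(volume : Measure ℝ), ∀ ℓ, a ℓ (ω * T) = 0 := hqmp.ae h0
    have hX0 : ∀ᵐ ω ∂(volume : Measure ℝ), X ω = 0 :=
      h0'.mono fun ω hω => by rw [hXa ω]; simp [hω]
    obtain ⟨ω, hne, hz⟩ := (hXnz.and_eventually hX0).exists
    exact hne hz
  -- pick a good point
  obtain ⟨ν, ⟨hka, hkb⟩, ℓ0, hℓ0⟩ := (hae.and_frequently hanz).exists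
  set s := ∑ ℓ ∈ Sa, ‖a ℓ ν‖ with hs_def
  set t := ∑ r ∈ Sb, ‖b r ν‖ with ht_def
  have hs : 0 < s := by
    have hmem : ℓ0 ∈ Sa := by
      by_contra h; exact hℓ0 (hSa ℓ0 h ν)
    have h1 : ‖a ℓ0 ν‖ ≤ s :=
      Finset.single_le_sum (f := fun ℓ => ‖a ℓ ν‖) (fun ℓ _ => norm_nonneg _) hmem
    have h2 : 0 < ‖a ℓ0 ν‖ := norm_pos_iff.mpr hℓ0
    linarith
  have hA : s ≤ (Sa.card : ℝ) * (μ * t) := by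
    calc s ≤ ∑ _ℓ ∈ Sa, μ * t := Finset.sum_le_sum fun ℓ _ => hka ℓ
      _ = (Sa.card : ℝ) * (μ * t) := by rw [Finset.sum_const, nsmul_eq_mul]
  have hB : t ≤ (Sb.card : ℝ) * (μ * s) := by
    calc t ≤ ∑ _r ∈ Sb, μ * s := Finset.sum_le_sum fun r _ => hkb r
      _ = (Sb.card : ℝ) * (μ * s) := by rw [Finset.sum_const, nsmul_eq_mul]
  have hcard : (1 : ℝ) ≤ (Sa.card : ℝ) * (Sb.card : ℝ) * μ ^ 2 := by
    have hAnn : (0 : ℝ) ≤ (Sa.card : ℝ) := Nat.cast_nonneg _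
    have hBnn : (0 : ℝ) ≤ (Sb.card : ℝ) := Nat.cast_nonneg _
    nlinarith [mul_le_mul_of_nonneg_left hB (mul_nonneg hAnn hμpos.le)]
  rw [ge_iff_le]
  have hsq : (1 / μ) ^ 2 ≤ (Sa.card : ℝ) * Sb.card := by
    rw [div_pow, one_pow, div_le_iff₀ (by positivity)]
    linarith
  calc 1 / μ = Real.sqrt ((1 / μ) ^ 2) := (Real.sqrt_sq (by positivity)).symm
    _ ≤ Real.sqrt ((Sa.card : ℝ) * Sb.card) := Real.sqrt_le_sqrt hsq
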